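/- arXiv:1106.3012 — 7 statements merged into one kernel-verified Lean document; each statement's English description precedes it below -/
import Mathlib

section
/- Let M be a module over a ring R, let N be a submodule of M, and fix elements s_0, ..., s_k of R acting on M (on the right) as linear maps S_i : M → M, x ↦ x·s_i. Suppose for each 0 ≤ m ≤ k there is a linear map ψ_m : M → M such that: (i) ψ_m maps N into N; (ii) for all x ∈ N and all i < m, (x·s_i)ψ_m = (xψ_m)·s_i; and (iii) for all x ∈ N, (xψ_m)·s_m + (x·s_m)ψ_m = x. If x ∈ N satisfies x·s_i = 0 for all 0 ≤ i ≤ k, then for each 0 ≤ i ≤ k the element y_i = xψ_iψ_{i−1}⋯ψ_1ψ_0 satisfies y_i·(s_0 s_1 ⋯ s_i) = x. In particular, x lies in the image of the map z ↦ z·(s_0 s_1 ⋯ s_i) for every i ≤ k. -/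
/-- `applyPsi ψ i x = x ψ_i ψ_{i-1} ⋯ ψ_1 ψ_0` (right-action notation:
`ψ_i` is applied first, then `ψ_{i-1}`, ..., and `ψ_0` last). -/
def applyPsi {M : Type*} (ψ : ℕ → M → M) : ℕ → M → M
  | 0, x => ψ 0 x
  | i + 1, x => applyPsi ψ i (ψ (i + 1) x)

/-- `applyS S i y = y·(s_0 s_1 ⋯ s_i)` (right-action notation:
`S 0` is applied first, then `S 1`, ..., and `S i` last). -/
def applyS {M : Type*} (S : ℕ → M → M) : ℕ → M → M
  | 0, x => S 0 x
  | i + 1, x => S (i + 1) (applyS S i x)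

/-- Abstract form of the main theorem on k-th order homotopy systems, over F₂.
`S i` is right multiplication by `s_i` and `ψ i` the homotopies; `N` is the
null subspace.  If `x ∈ N` is annihilated by all `s_i`, `i ≤ k`, then
`y_i = x ψ_i ⋯ ψ_0` satisfies `y_i ·(s_0 ⋯ s_i) = x`; in particular `x` is in
the image of `z ↦ z·(s_0 ⋯ s_i)` for every `i ≤ k`. -/
theorem stmt_4 (M : Type*) [AddCommGroup M] [Module (ZMod 2) M]
    (N : Submodule (ZMod 2) M) (k : ℕ)
    (S ψ : ℕ → M →ₗ[ZMod 2] M)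
    (hstable : ∀ m ≤ k, ∀ x ∈ N, ψ m x ∈ N)
    (hcomm : ∀ m ≤ k, ∀ i < m, ∀ x ∈ N, ψ m (S i x) = S i (ψ m x))
    (hhtpy : ∀ m ≤ k, ∀ x ∈ N, S m (ψ m x) + ψ m (S m x) = x)
    (x : M) (hxN : x ∈ N) (hann : ∀ i ≤ k, S i x = 0) :
    ∀ i ≤ k,
      applyS (fun j y => S j y) i (applyPsi (fun j y => ψ j y) i x) = x ∧
      ∃ y : M, applyS (fun j y => S j y) i y = x := by
  have key : ∀ i, i ≤ k → ∀ z, z ∈ N → (∀ j ≤ i, S j z = 0) →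
      applyS (fun j y => S j y) i (applyPsi (fun j y => ψ j y) i z) = z := by
    intro i
    induction i with
    | zero =>
      intro hk z hzN hz
      have h := hhtpy 0 hk z hzN
      rw [hz 0 le_rfl, map_zero, add_zero] at h
      simpa [applyS, applyPsi] using h
    | succ i ih =>
      intro hk z hzN hz
      have hik : i ≤ k := Nat.le_of_succ_le hk
      set z' := ψ (i + 1) z with hz'
      have hz'N : z' ∈ N := hstable (i + 1) hk z hzN
      have hz'ann : ∀ j ≤ i, S j z' = 0 := by
        intro j hj
        have := hcomm (i + 1) hk j (Nat.lt_succ_of_le hj) z hzN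
        rw [hz', ← this, hz j (Nat.le_succ_of_le hj), map_zero]
      have hrec := ih hik z' hz'N hz'ann
      have h := hhtpy (i + 1) hk z hzN
      rw [hz (i + 1) le_rfl, map_zero, add_zero] at h
      simp only [applyS, applyPsi]
      rw [hrec]
      exact h
  intro i hi
  have h := key i hi x hxN (fun j hj => hann j (hj.trans hi))
  exact ⟨h, _, h⟩
end

section
/- Let ∇₁ be the F₂-vector space with basis {[a] : a ∈ ℤ}, with operations Sq^{2^n} defined by [a]Sq^{2^n} = c(a − 2^n, n)·[a − 2^n], where c(b, n) ∈ F₂ equals 1 if b mod 2^{n+1} ∈ [2^n, 2^{n+1}) and 0 otherwise, and let ψ^{2^m} be the shift [a] ↦ [a + 2^m]. Then for all a ∈ ℤ and all m > n ≥ 0: [a]ψ^{2^m}Sq^{2^n} = [a]Sq^{2^n}ψ^{2^m}, and for all m ≥ 0: [a]ψ^{2^m}Sq^{2^m} + [a]Sq^{2^m}ψ^{2^m} = [a]. -/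
noncomputable section

/-- `∇₁`: the F₂-vector space with basis `{[a] : a ∈ ℤ}`. -/
abbrev Nabla : Type := ℤ →₀ ZMod 2

/-- The mod-2 generalized binomial coefficient `((b choose 2^n))`:
`1` iff `b mod 2^(n+1) ∈ [2^n, 2^(n+1))`. -/
def cc (b : ℤ) (n : ℕ) : ZMod 2 :=
  if (2 : ℤ) ^ n ≤ b % 2 ^ (n + 1) then 1 else 0

/-- The operation `Sq^{2^n}` on `∇₁`: `[a]Sq^{2^n} = c(a − 2^n, n)·[a − 2^n]`. -/
def sqN (n : ℕ) (x : Nabla) : Nabla :=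
  x.sum fun a co => co • (cc (a - 2 ^ n) n • Finsupp.single (a - 2 ^ n) (1 : ZMod 2))

/-- The shift map `ψ^{2^m} : [a] ↦ [a + 2^m]`. -/
def psiN (m : ℕ) (x : Nabla) : Nabla :=
  x.sum fun a co => Finsupp.single (a + 2 ^ m) co

lemma psi_single (m : ℕ) (a : ℤ) (c : ZMod 2) :
    psiN m (Finsupp.single a c) = Finsupp.single (a + 2 ^ m) c := by
  unfold psiN
  rw [Finsupp.sum_single_index]
  exact Finsupp.single_zero _

lemma sq_single (n : ℕ) (a : ℤ) :
    sqN n (Finsupp.single a 1) = Finsupp.single (a - 2 ^ n) (cc (a - 2 ^ n) n) := by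
  unfold sqN
  rw [Finsupp.sum_single_index, one_smul, Finsupp.smul_single, smul_eq_mul, mul_one]
  exact zero_smul _ _

lemma cc_add_pow (b : ℤ) (n m : ℕ) (h : n < m) : cc (b + 2 ^ m) n = cc b n := by
  unfold cc
  have : (2:ℤ) ^ m = 2 ^ (n+1) * 2 ^ (m - (n+1)) := by
    rw [← pow_add]; congr 1; omega
  rw [this, Int.add_mul_emod_self_left]

lemma cc_sum (a : ℤ) (m : ℕ) : cc a m + cc (a - 2 ^ m) m = 1 := by
  unfold cc
  set k : ℤ := 2 ^ m with hk
  have hk0 : 0 < k := by positivity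
  have h2 : (2:ℤ) ^ (m+1) = 2 * k := by rw [pow_succ]; ring
  rw [h2]
  have hr0 : 0 ≤ a % (2*k) := Int.emod_nonneg a (by omega)
  have hr1 : a % (2*k) < 2*k := Int.emod_lt_of_pos a (by omega)
  set r : ℤ := a % (2*k) with hrr
  have hkk : k % (2*k) = k := Int.emod_eq_of_lt (le_of_lt hk0) (by omega)
  have hsub : (a - k) % (2*k) = (r - k) % (2*k) := by
    rw [Int.sub_emod, hkk]
  rcases le_or_gt k r with h | h
  · have : (r - k) % (2*k) = r - k := Int.emod_eq_of_lt (by omega) (by omega)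
    rw [hsub, this, if_pos h, if_neg (by omega)]
    decide
  · have e1 : (r - k) % (2*k) = (r + k) % (2*k) := by
      have e : r - k = r + k + 2*k*(-1) := by ring
      rw [e, Int.add_mul_emod_self_left]
    have e2 : (r + k) % (2*k) = r + k := Int.emod_eq_of_lt (by omega) (by omega)
    rw [hsub, e1, e2, if_neg (by omega), if_pos (by omega)]
    decide

/-- In `∇₁`: for `m > n`, `[a]ψ^{2^m}Sq^{2^n} = [a]Sq^{2^n}ψ^{2^m}`, and for all `m`,
`[a]ψ^{2^m}Sq^{2^m} + [a]Sq^{2^m}ψ^{2^m} = [a]`. -/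
theorem stmt_5 (a : ℤ) :
    (∀ m n : ℕ, n < m →
      sqN n (psiN m (Finsupp.single a 1)) = psiN m (sqN n (Finsupp.single a 1))) ∧
    (∀ m : ℕ,
      sqN m (psiN m (Finsupp.single a 1)) + psiN m (sqN m (Finsupp.single a 1)) =
        Finsupp.single a 1) := by
  constructor
  · intro m n h
    rw [psi_single, sq_single, sq_single, psi_single]
    have e : a + 2 ^ m - 2 ^ n = a - 2 ^ n + 2 ^ m := by ring
    rw [e, cc_add_pow _ _ _ h]
  · intro m
    rw [psi_single, sq_single, sq_single, psi_single]
    have e : a + 2 ^ m - 2 ^ m = a := by ring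
    have e' : a - 2 ^ m + 2 ^ m = a := by ring
    rw [e, e', ← Finsupp.single_add, cc_sum]
end
end

section
/- Let Γ₁ be the F₂-vector space with basis {[a] : a ≥ 1}, with right action [a]Sq^i = C(a − i, i)·[a − i] mod 2 (zero if a − i < 1). For m ≥ 0 and a ≥ 2^m, the homotopy relation holds: [a]ψ^{2^m}Sq^{2^m} + [a]Sq^{2^m}ψ^{2^m} = [a], where ψ^{2^m}[a] = [a + 2^m]. -/
noncomputable section

/-- `Γ₁`: the F₂-vector space with basis `{[a] : a ≥ 1}`. -/
abbrev Gamma1 : Type := ℕ →₀ ZMod 2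

/-- The basis element `[a]`. -/
def e (a : ℕ) : Gamma1 := Finsupp.single a 1

/-- The right Steenrod action: `[a]Sq^i = C(a−i, i)·[a−i]` mod 2
(zero if `a − i < 1`, since then `C(a−i,i) ≡ 0` for `i ≥ 1`). -/
def sq1 (i : ℕ) (x : Gamma1) : Gamma1 :=
  x.sum fun a c => c • ((Nat.choose (a - i) i : ZMod 2) • e (a - i))

/-- The shift map `ψ^{2^m} : [a] ↦ [a + 2^m]`. -/
def psi1 (m : ℕ) (x : Gamma1) : Gamma1 :=
  x.sum fun a c => Finsupp.single (a + 2 ^ m) c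

/-- Lucas-type computation: `C(n, 2^m) ≡ (n / 2^m) % 2 (mod 2)`. -/
lemma choose_two_pow_mod2 (m n : ℕ) :
    Nat.choose n (2 ^ m) ≡ n / 2 ^ m % 2 [MOD 2] := by
  induction m generalizing n with
  | zero =>
    have h := (Choose.choose_modEq_choose_mod_mul_choose_div_nat (n := n) (k := 1) (p := 2))
    simpa using h
  | succ k ih =>
    have h := (Choose.choose_modEq_choose_mod_mul_choose_div_nat
      (n := n) (k := 2 ^ (k + 1)) (p := 2))
    refine h.trans ?_
    have h2 : 2 ^ (k + 1) % 2 = 0 := by simp [pow_succ, Nat.mul_mod_left]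
    have h3 : 2 ^ (k + 1) / 2 = 2 ^ k := by
      rw [pow_succ]; exact Nat.mul_div_cancel _ (by norm_num)
    rw [h2, h3, Nat.choose_zero_right, one_mul]
    have h4 : n / 2 / 2 ^ k = n / 2 ^ (k + 1) := by
      rw [Nat.div_div_eq_div_mul, pow_succ, mul_comm]
    simpa [h4] using ih (n / 2)

/-- The key combinatorial fact: `C(a, 2^m) + C(a − 2^m, 2^m) ≡ 1 (mod 2)` for `a ≥ 2^m`. -/
lemma key (m a : ℕ) (ha : 2 ^ m ≤ a) :
    ((Nat.choose a (2 ^ m) : ℕ) : ZMod 2)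
      + ((Nat.choose (a - 2 ^ m) (2 ^ m) : ℕ) : ZMod 2) = 1 := by
  have c1 : ((Nat.choose a (2 ^ m) : ℕ) : ZMod 2) = ((a / 2 ^ m : ℕ) : ZMod 2) := by
    have h := (ZMod.natCast_eq_natCast_iff _ _ 2).mpr (choose_two_pow_mod2 m a)
    rw [h, ZMod.natCast_mod]
  have c2 : ((Nat.choose (a - 2 ^ m) (2 ^ m) : ℕ) : ZMod 2)
      = (((a - 2 ^ m) / 2 ^ m : ℕ) : ZMod 2) := by
    have h := (ZMod.natCast_eq_natCast_iff _ _ 2).mpr (choose_two_pow_mod2 m (a - 2 ^ m))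
    rw [h, ZMod.natCast_mod]
  have hdiv : a / 2 ^ m = (a - 2 ^ m) / 2 ^ m + 1 := by
    conv_lhs => rw [← Nat.sub_add_cancel ha]
    rw [Nat.add_div_right _ (Nat.pow_pos (n := m) (by norm_num))]
  rw [c1, c2, hdiv]
  push_cast
  ring_nf
  rw [show (2 : ZMod 2) = 0 from rfl]
  ring

/-- For `m ≥ 0` and `a ≥ 2^m`, the homotopy relation
`[a]ψ^{2^m}Sq^{2^m} + [a]Sq^{2^m}ψ^{2^m} = [a]` holds. -/
theorem stmt_7 (m a : ℕ) (ha : 2 ^ m ≤ a) :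
    sq1 (2 ^ m) (psi1 m (e a)) + psi1 m (sq1 (2 ^ m) (e a)) = e a := by
  have h1 : psi1 m (e a) = Finsupp.single (a + 2 ^ m) (1 : ZMod 2) := by
    simp [psi1, e, Finsupp.sum_single_index]
  have h2 : sq1 (2 ^ m) (psi1 m (e a))
      = (Nat.choose a (2 ^ m) : ZMod 2) • e a := by
    rw [h1, sq1, Finsupp.sum_single_index (by simp), one_smul,
      Nat.add_sub_cancel]
  have h3 : sq1 (2 ^ m) (e a)
      = Finsupp.single (a - 2 ^ m) ((Nat.choose (a - 2 ^ m) (2 ^ m) : ZMod 2)) := by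
    rw [sq1, e, Finsupp.sum_single_index (by simp), one_smul]
    simp [e, Finsupp.smul_single]
  have h4 : psi1 m (sq1 (2 ^ m) (e a))
      = (Nat.choose (a - 2 ^ m) (2 ^ m) : ZMod 2) • e a := by
    rw [h3, psi1, Finsupp.sum_single_index (by simp), Nat.sub_add_cancel ha]
    simp [e, Finsupp.smul_single]
  rw [h2, h4, ← add_smul, key m a ha, one_smul]

end
end

section
/- Let M be a right A-algebra (an F₂-algebra on which the mod-2 Steenrod algebra A acts on the right via the Cartan formula). For every k ≥ 0, the set Δ_M(k) = ⋂_{i=0}^{k} ker Sq^{2^i} is a subalgebra of M. -/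
noncomputable section

open FreeAlgebra

/-- The defining relations of the mod-2 Steenrod algebra: `Sq⁰ = 1` and the
Adem relations `Sq^a Sq^b = Σ_c C(b−c−1, a−2c) Sq^{a+b−c} Sq^c` for `0 < a < 2b`. -/
inductive AdemRel : FreeAlgebra (ZMod 2) ℕ → FreeAlgebra (ZMod 2) ℕ → Prop
  | sq_zero : AdemRel (ι (ZMod 2) 0) 1
  | adem (a b : ℕ) (h0 : 0 < a) (h : a < 2 * b) :
      AdemRel (ι (ZMod 2) a * ι (ZMod 2) b)
        (∑ c ∈ Finset.range (a / 2 + 1),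
          (Nat.choose (b - c - 1) (a - 2 * c) : ZMod 2) •
            (ι (ZMod 2) (a + b - c) * ι (ZMod 2) c))

/-- The mod-2 Steenrod algebra. -/
abbrev Steenrod : Type := RingQuot AdemRel

/-- The Steenrod square `Sq^n`. -/
def Sq (n : ℕ) : Steenrod := RingQuot.mkRingHom AdemRel (ι (ZMod 2) n)

lemma Sq_eq_mkAlgHom (n : ℕ) : Sq n = RingQuot.mkAlgHom (ZMod 2) AdemRel (ι (ZMod 2) n) := by
  rw [Sq, ← RingQuot.mkAlgHom_coe (ZMod 2) AdemRel]; rfl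

lemma sq_zero_eq : Sq 0 = 1 := by
  rw [Sq, RingQuot.mkRingHom_rel AdemRel.sq_zero]; simp

lemma adem_eq (a b : ℕ) (h0 : 0 < a) (h : a < 2 * b) :
    Sq a * Sq b = ∑ c ∈ Finset.range (a / 2 + 1),
      (Nat.choose (b - c - 1) (a - 2 * c) : ZMod 2) • (Sq (a + b - c) * Sq c) := by
  simp only [Sq_eq_mkAlgHom, ← map_mul, ← map_smul, ← map_sum]
  exact RingQuot.mkAlgHom_rel (ZMod 2) (AdemRel.adem a b h0 h)

lemma choose_two_pow_sub_one (j : ℕ) : ∀ a, a < 2 ^ j → (Nat.choose (2 ^ j - 1) a : ZMod 2) = 1 := by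
  induction j with
  | zero => intro a ha; interval_cases a; simp
  | succ j ih =>
    intro a ha
    have : Fact (Nat.Prime 2) := ⟨Nat.prime_two⟩
    have h := Choose.choose_modEq_choose_mod_mul_choose_div (n := 2 ^ (j+1) - 1) (k := a) (p := 2)
    have h2 : ((Nat.choose (2 ^ (j+1) - 1) a : ℤ) : ZMod 2) =
        ((Nat.choose ((2 ^ (j+1) - 1) % 2) (a % 2) *
          Nat.choose ((2 ^ (j+1) - 1) / 2) (a / 2) : ℤ) : ZMod 2) :=
      (ZMod.intCast_eq_intCast_iff _ _ _).mpr h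
    have e1 : (2 ^ (j+1) - 1) % 2 = 1 := by omega
    have e2 : (2 ^ (j+1) - 1) / 2 = 2 ^ j - 1 := by omega
    have e3 : Nat.choose 1 (a % 2) = 1 := by
      have : a % 2 < 2 := Nat.mod_lt _ (by norm_num)
      interval_cases h : a % 2 <;> simp
    rw [e1, e2] at h2
    push_cast at h2
    rw [h2, e3, ih (a / 2) (by omega)]
    push_cast
    ring

/-- Let `M` be a right `A`-algebra: an F₂-algebra with a right action of the
mod-2 Steenrod algebra satisfying the Cartan formula
`(xy)Sq^n = Σ_{p+q=n} (xSq^p)(ySq^q)` (and `1·Sq^n = 0` for `n > 0`).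
For every `k ≥ 0`, the set `Δ_M(k) = ⋂_{i=0}^k ker Sq^{2^i}` is a subalgebra
of `M`. -/
theorem stmt_10 (M : Type*) [Ring M] [Algebra (ZMod 2) M]
    (act : M →ₗ[ZMod 2] Steenrod →ₗ[ZMod 2] M)
    (hone : ∀ x : M, act x 1 = x)
    (hmul : ∀ (x : M) (a b : Steenrod), act x (a * b) = act (act x a) b)
    (hcartan : ∀ (x y : M) (n : ℕ),
      act (x * y) (Sq n) =
        ∑ p ∈ Finset.range (n + 1), act x (Sq p) * act y (Sq (n - p)))
    (hunit : ∀ n : ℕ, 0 < n → act (1 : M) (Sq n) = 0)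
    (k : ℕ) :
    ∃ S : Subalgebra (ZMod 2) M,
      (S : Set M) = {x : M | ∀ i ≤ k, act x (Sq (2 ^ i)) = 0} := by
  have hzero : ∀ s : Steenrod, act (0 : M) s = 0 := by
    intro s; rw [map_zero]; rfl
  -- any element killed by all `Sq^{2^i}`, `i ≤ k`, is killed by all `Sq^n`, `1 ≤ n ≤ 2^k`.
  have kill : ∀ x : M, (∀ i ≤ k, act x (Sq (2 ^ i)) = 0) →
      ∀ n, 1 ≤ n → n ≤ 2 ^ k → act x (Sq n) = 0 := by
    intro x hx n
    induction n using Nat.strong_induction_on with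
    | _ n ih =>
      intro h1 h2
      by_cases hp : ∃ i, n = 2 ^ i
      · obtain ⟨i, rfl⟩ := hp
        exact hx i ((Nat.pow_le_pow_iff_right (by norm_num)).mp h2)
      · set j := Nat.log 2 n with hj
        have hb1 : 2 ^ j ≤ n := Nat.pow_log_le_self 2 (by omega)
        have hb2 : n < 2 ^ (j + 1) := Nat.lt_pow_succ_log_self (by norm_num) n
        have hbn : 2 ^ j < n := lt_of_le_of_ne hb1 (fun e => hp ⟨j, e.symm⟩)
        have h0 : 0 < n - 2 ^ j := by omega
        have hab : n - 2 ^ j < 2 * 2 ^ j := by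
          have : 2 ^ (j + 1) = 2 * 2 ^ j := by ring
          omega
        have hadem := adem_eq (n - 2 ^ j) (2 ^ j) h0 hab
        have hn : n - 2 ^ j + 2 ^ j = n := by omega
        rw [hn] at hadem
        have hstep := congrArg (act x) hadem
        rw [map_sum] at hstep
        have hL : act x (Sq (n - 2 ^ j) * Sq (2 ^ j)) = 0 := by
          rw [hmul, ih (n - 2 ^ j) (by omega) (by omega) (by omega), hzero]
        have hR : ∀ c ∈ Finset.range ((n - 2 ^ j) / 2 + 1), c ≠ 0 →
            (Nat.choose (2 ^ j - c - 1) (n - 2 ^ j - 2 * c) : ZMod 2) •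
              act x (Sq (n - c) * Sq c) = 0 := by
          intro c hc hc0
          have hclt : c ≤ (n - 2 ^ j) / 2 := by
            simpa [Nat.lt_succ_iff] using Finset.mem_range.mp hc
          have : act x (Sq (n - c) * Sq c) = 0 := by
            rw [hmul, ih (n - c) (by omega) (by omega) (by omega), hzero]
          rw [this, smul_zero]
        simp only [map_smul] at hstep
        rw [Finset.sum_eq_single 0 hR (by simp)] at hstep
        have hcoef : (Nat.choose (2 ^ j - 0 - 1) (n - 2 ^ j - 2 * 0) : ZMod 2) = 1 := by
          simpa using choose_two_pow_sub_one j (n - 2 ^ j) (by omega)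
        rw [hcoef, one_smul, Nat.sub_zero, sq_zero_eq, mul_one] at hstep
        rw [← hstep, hL]
  refine ⟨{ carrier := {x : M | ∀ i ≤ k, act x (Sq (2 ^ i)) = 0}
            mul_mem' := ?_
            one_mem' := ?_
            add_mem' := ?_
            zero_mem' := ?_
            algebraMap_mem' := ?_ }, rfl⟩
  · intro x y hx hy i hi
    rw [hcartan]
    apply Finset.sum_eq_zero
    intro p hp
    rcases Nat.eq_zero_or_pos p with rfl | hp0
    · rw [sq_zero_eq, hone, Nat.sub_zero, hy i hi, mul_zero]
    · rw [kill x hx p hp0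
        (le_trans (Nat.le_of_lt_succ (Finset.mem_range.mp hp))
          (Nat.pow_le_pow_right (by norm_num) hi)), zero_mul]
  · intro i hi
    exact hunit _ (Nat.pow_pos (n := i) (by norm_num : 0 < 2))
  · intro x y hx hy i hi
    rw [map_add, LinearMap.add_apply, hx i hi, hy i hi, add_zero]
  · intro i hi
    exact hzero _
  · intro r i hi
    rw [Algebra.algebraMap_eq_smul_one, map_smul, LinearMap.smul_apply,
      hunit _ (Nat.pow_pos (n := i) (by norm_num : 0 < 2)), smul_zero]
end
end

section
/- Let Γ = ⊕_{s≥0} Γ_s be the free associative F₂-algebra on non-commuting generators [a], a ≥ 1, with right Steenrod action determined by [a]Sq^i = C(a−i, i)[a−i] mod 2 and the Cartan formula. If x = Σ_{i≥1} [i]·x_i ∈ Γ_s (s ≥ 2) satisfies xSq^1 = 0, then for each n ≥ 1: x_{2n} = x_{2n−1}Sq^1 and x_{2n}Sq^1 = 0. -/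
noncomputable section

/-- `Γ`: the free associative F₂-algebra on non-commuting generators `[a]`,
modelled as the monoid algebra of the free monoid on ℕ (only letters `a ≥ 1`
are used; the Steenrod action never produces the letter `0` from them). -/
abbrev Gam : Type := MonoidAlgebra (ZMod 2) (FreeMonoid ℕ)

/-- The generator `[a]` of `Γ`. -/
def gen (a : ℕ) : Gam := MonoidAlgebra.single (FreeMonoid.ofList [a]) 1

/-- The right Steenrod action on a word, defined on generators by
`[a]Sq^i = C(a−i, i)·[a−i]` (mod 2) and extended by the Cartan formula. -/
def sqWord : List ℕ → ℕ → Gam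
  | [], n => if n = 0 then 1 else 0
  | a :: w, n =>
      ∑ p ∈ Finset.range (n + 1),
        (Nat.choose (a - p) p : ZMod 2) • (gen (a - p) * sqWord w (n - p))

/-- The right Steenrod action on `Γ`: `SqG n x = x·Sq^n`. -/
def SqG (n : ℕ) (x : Gam) : Gam :=
  Finsupp.sum x.coeff fun w c => c • sqWord (FreeMonoid.toList w) n

/-- `x` is homogeneous of length `s` (i.e. `x ∈ Γ_s`). -/
def homLen (s : ℕ) (x : Gam) : Prop :=
  ∀ w ∈ x.coeff.support, (FreeMonoid.toList w).length = s

def phi (j : ℕ) : Gam →ₗ[ZMod 2] Gam :=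
  (Finsupp.lsum (ZMod 2) fun w =>
    if (FreeMonoid.toList w).head? = some j then
      MonoidAlgebra.lsingle (R := ZMod 2) (FreeMonoid.ofList (FreeMonoid.toList w).tail) else 0)
    ∘ₗ (MonoidAlgebra.coeffLinearEquiv (ZMod 2)).toLinearMap

lemma phi_single (j : ℕ) (w : FreeMonoid ℕ) (c : ZMod 2) :
    phi j (MonoidAlgebra.single w c) =
      if (FreeMonoid.toList w).head? = some j then
        MonoidAlgebra.single (FreeMonoid.ofList (FreeMonoid.toList w).tail) c else 0 := by
  show Finsupp.lsum (ZMod 2) (fun w : FreeMonoid ℕ =>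
      if (FreeMonoid.toList w).head? = some j then
        MonoidAlgebra.lsingle (R := ZMod 2) (S := ZMod 2) (FreeMonoid.ofList (FreeMonoid.toList w).tail) else 0)
      (Finsupp.single w c) = _
  rw [Finsupp.lsum_single]
  split <;> rfl

def SqGL (n : ℕ) : Gam →ₗ[ZMod 2] Gam :=
  (Finsupp.lsum (ZMod 2) fun w =>
    LinearMap.toSpanSingleton (ZMod 2) Gam (sqWord (FreeMonoid.toList w) n))
    ∘ₗ (MonoidAlgebra.coeffLinearEquiv (ZMod 2)).toLinearMap

lemma SqG_eq (n : ℕ) (x : Gam) : SqG n x = SqGL n x := rfl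

lemma SqG_single (n : ℕ) (w : FreeMonoid ℕ) (c : ZMod 2) :
    SqG n (MonoidAlgebra.single w c) = c • sqWord (FreeMonoid.toList w) n := by
  rw [SqG_eq]
  show Finsupp.lsum (ZMod 2) (fun w : FreeMonoid ℕ =>
      LinearMap.toSpanSingleton (ZMod 2) Gam (sqWord (FreeMonoid.toList w) n)) (Finsupp.single w c) = _
  rw [Finsupp.lsum_single]; rfl

lemma gen_mul_single (a : ℕ) (w : FreeMonoid ℕ) (c : ZMod 2) :
    gen a * MonoidAlgebra.single w c =
      MonoidAlgebra.single (FreeMonoid.ofList (a :: FreeMonoid.toList w)) c := by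
  rw [gen, MonoidAlgebra.single_mul_single, one_mul]
  rfl

lemma phi_gen_mul (j i : ℕ) (y : Gam) :
    phi j (gen i * y) = if i = j then y else 0 := by
  have key : (phi j).comp (LinearMap.mulLeft (ZMod 2) (gen i)) =
      (if i = j then (LinearMap.id : Gam →ₗ[ZMod 2] Gam) else 0) := by
    apply MonoidAlgebra.lhom_ext'
    intro w; apply LinearMap.ext; intro c
    have : ∀ z : Gam, ((phi j).comp (LinearMap.mulLeft (ZMod 2) (gen i))) z = phi j (gen i * z) := fun _ => rfl
    show phi j (gen i * MonoidAlgebra.single w c) = _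
    rw [gen_mul_single, phi_single]
    simp only [FreeMonoid.toList_ofList, List.head?_cons, List.tail_cons]
    by_cases h : i = j <;> simp [h, FreeMonoid.ofList_toList] <;> rfl
  calc phi j (gen i * y) = ((phi j).comp (LinearMap.mulLeft (ZMod 2) (gen i))) y := rfl
    _ = _ := by rw [key]; by_cases h : i = j <;> simp [h]

lemma sqWord_zero (l : List ℕ) : sqWord l 0 = MonoidAlgebra.single (FreeMonoid.ofList l) 1 := by
  induction l with
  | nil => rw [sqWord]; simp; rfl
  | cons a w ih =>
      rw [sqWord, Finset.sum_range_one]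
      simp [ih, gen_mul_single]

lemma sqWord_cons_one (a : ℕ) (w : List ℕ) :
    sqWord (a :: w) 1 =
      ((a-1).choose 1 : ZMod 2) • (gen (a-1) * sqWord w 0) + gen a * sqWord w 1 := by
  rw [sqWord, Finset.sum_range_succ, Finset.sum_range_one]
  simp [add_comm]

lemma SqG_one_gen_mul (a : ℕ) (y : Gam) :
    SqG 1 (gen a * y) = ((a-1).choose 1 : ZMod 2) • (gen (a-1) * y) + gen a * SqG 1 y := by
  have key : (SqGL 1).comp (LinearMap.mulLeft (ZMod 2) (gen a)) =
      ((a-1).choose 1 : ZMod 2) • LinearMap.mulLeft (ZMod 2) (gen (a-1))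
        + (LinearMap.mulLeft (ZMod 2) (gen a)).comp (SqGL 1) := by
    apply MonoidAlgebra.lhom_ext'
    intro w; apply LinearMap.ext; intro c
    show SqG 1 (gen a * MonoidAlgebra.single w c)
        = ((a-1).choose 1 : ZMod 2) • (gen (a-1) * MonoidAlgebra.single w c)
          + gen a * SqG 1 (MonoidAlgebra.single w c)
    rw [gen_mul_single, SqG_single, SqG_single, FreeMonoid.toList_ofList, sqWord_cons_one,
      sqWord_zero, FreeMonoid.ofList_toList, smul_add]
    congr 1
    · rw [smul_comm]
      congr 1
      rw [← mul_smul_comm]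
      congr 1
      rw [MonoidAlgebra.smul_single', mul_one]
    · rw [mul_smul_comm]
  show (SqGL 1).comp (LinearMap.mulLeft (ZMod 2) (gen a)) y = _
  rw [key]
  rfl

lemma gam_eq_of_add_eq_zero (a b : Gam) (h : a + b = 0) : a = b := by
  have hb : b + b = 0 := by
    rw [← two_smul (ZMod 2) b, show (2 : ZMod 2) = 0 from rfl, zero_smul]
  calc a = a + (b + b) := by rw [hb, add_zero]
    _ = (a + b) + b := by rw [add_assoc]
    _ = b := by rw [h, zero_add]

/-- If `x = Σ_{i≥1} [i]·x_i ∈ Γ_s` (`s ≥ 2`) satisfies `xSq¹ = 0`, then for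
each `n ≥ 1`: `x_{2n} = x_{2n−1}Sq¹` and `x_{2n}Sq¹ = 0`. -/
theorem stmt_12 (s : ℕ) (hs : 2 ≤ s) (x : Gam) (x_ : ℕ → Gam)
    (hxlen : homLen s x) (hcomplen : ∀ i, homLen (s - 1) (x_ i))
    (hfin : (Function.support x_).Finite) (h0 : x_ 0 = 0)
    (hx : x = ∑ᶠ i : ℕ, gen i * x_ i)
    (hker : SqG 1 x = 0) :
    ∀ n : ℕ, 1 ≤ n →
      x_ (2 * n) = SqG 1 (x_ (2 * n - 1)) ∧ SqG 1 (x_ (2 * n)) = 0 := by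
  intro n hn
  classical
  set T : Finset ℕ := hfin.toFinset ∪ {2 * n - 1, 2 * n} with hTdef
  have hsub : Function.support (fun i => gen i * x_ i) ⊆ ↑T := by
    intro i hi
    have : x_ i ≠ 0 := by
      intro h; apply hi; simp [h]
    exact Finset.mem_coe.mpr (Finset.mem_union_left _ (hfin.mem_toFinset.mpr this))
  have hxT : x = ∑ i ∈ T, gen i * x_ i :=
    hx.trans (finsum_eq_sum_of_support_subset _ hsub)
  have hval : ∀ j : ℕ,
      ∑ i ∈ T, ((((i - 1).choose 1 : ZMod 2)) • (if i - 1 = j then x_ i else 0)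
        + (if i = j then SqG 1 (x_ i) else 0)) = 0 := by
    intro j
    have h1 : SqG 1 x
        = ∑ i ∈ T, (((i - 1).choose 1 : ZMod 2) • (gen (i - 1) * x_ i) + gen i * SqG 1 (x_ i)) := by
      rw [hxT, SqG_eq, map_sum]
      exact Finset.sum_congr rfl fun i _ => by rw [← SqG_eq, SqG_one_gen_mul]
    have h2 := congrArg (phi j) (h1.symm.trans hker)
    rw [map_sum, map_zero] at h2
    simp only [map_add, map_smul, phi_gen_mul] at h2
    exact h2
  have hmemT : ∀ k ∈ ({2 * n - 1, 2 * n} : Finset ℕ), k ∈ T := by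
    intro k hk; simp [hTdef]; simp at hk; tauto
  constructor
  · -- j = 2n - 1
    have h := hval (2 * n - 1)
    rw [← Finset.sum_subset (fun k hk => hmemT k hk) ?van] at h
    · rw [Finset.sum_pair (by omega : 2 * n - 1 ≠ 2 * n)] at h
      rw [if_pos rfl, if_neg (by omega : ¬(2 * n - 1 - 1 = 2 * n - 1)), smul_zero, zero_add,
        if_pos (by omega : 2 * n - 1 = 2 * n - 1), if_neg (by omega : ¬(2 * n = 2 * n - 1)),
        add_zero] at h
      have hcast : (((2 * n - 1).choose 1 : ℕ) : ZMod 2) = 1 := by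
        rw [Nat.choose_one_right, ← ZMod.natCast_mod, show (2 * n - 1) % 2 = 1 from by omega,
          Nat.cast_one]
      rw [hcast, one_smul] at h
      exact (gam_eq_of_add_eq_zero _ _ h).symm
    case van =>
      intro i hiT hi
      have hi1 : i ≠ 2 * n - 1 ∧ i ≠ 2 * n := by
        constructor <;> (intro h; exact hi (by simp [h]))
      obtain ⟨hia, hib⟩ := hi1
      rw [if_neg (by omega), if_neg (by omega), smul_zero, add_zero]
  · -- j = 2n
    have h := hval (2 * n)
    have hss : ({2 * n} : Finset ℕ) ⊆ T := by
      intro k hk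
      rw [Finset.mem_singleton] at hk
      subst hk
      exact hmemT _ (by simp)
    rw [← Finset.sum_subset hss ?van2] at h
    · rw [Finset.sum_singleton, if_neg (by omega : ¬(2 * n - 1 = 2 * n)), smul_zero, zero_add,
        if_pos rfl] at h
      exact h
    case van2 =>
      intro i hiT hi
      have hi' : i ≠ 2 * n := by intro h; exact hi (by simp [h])
      by_cases h1 : i = 2 * n + 1
      · subst h1
        rw [if_pos (by omega), if_neg (by omega), add_zero]
        have : (((2 * n + 1 - 1).choose 1 : ℕ) : ZMod 2) = 0 := by
          rw [Nat.choose_one_right, ← ZMod.natCast_mod, show (2 * n + 1 - 1) % 2 = 0 from by omega,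
            Nat.cast_zero]
        rw [this, zero_smul]
      · rw [if_neg (by omega), if_neg hi', smul_zero, add_zero]
end
end

section
/- With Γ as above, if x = Σ_{i≥1} [i]·x_i ∈ Γ_s (s ≥ 2) satisfies xSq^2 = 0, then for each m ≥ 1: x_{4m−2}Sq^1 = x_{4m−3}Sq^2, x_{4m} = x_{4m−2}Sq^2, x_{4m+1} = x_{4m−1}Sq^2 + x_{4m}Sq^1, and x_{4m}Sq^2 = 0. -/
noncomputable section

/-! ### Auxiliary machinery -/

/-- `SqG n` as a linear map. -/
def SqL (n : ℕ) : Gam →ₗ[ZMod 2] Gam :=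
  (Finsupp.lsum (ZMod 2) fun w =>
    LinearMap.toSpanSingleton (ZMod 2) Gam (sqWord (FreeMonoid.toList w) n))
  ∘ₗ (MonoidAlgebra.coeffLinearEquiv (ZMod 2)).toLinearMap

lemma SqG_eq_SqL (n : ℕ) (x : Gam) : SqG n x = SqL n x := rfl

lemma SqL_single (n : ℕ) (w : FreeMonoid ℕ) (c : ZMod 2) :
    SqL n (MonoidAlgebra.single w c) = c • sqWord (FreeMonoid.toList w) n := by
  rw [SqL, LinearMap.comp_apply, LinearEquiv.coe_coe, MonoidAlgebra.coeffLinearEquiv_apply,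
    MonoidAlgebra.coeff_single]
  erw [Finsupp.lsum_single]
  rw [LinearMap.toSpanSingleton_apply]

lemma SqL_gen_mul (n a : ℕ) (y : Gam) :
    SqL n (gen a * y) = ∑ p ∈ Finset.range (n + 1),
      (Nat.choose (a - p) p : ZMod 2) • (gen (a - p) * SqL (n - p) y) := by
  induction y using MonoidAlgebra.induction_linear with
  | zero => simp
  | add f g hf hg =>
      simp only [mul_add, map_add, hf, hg, smul_add, Finset.sum_add_distrib]
  | single w c =>
      rw [gen_mul_single, SqL_single, FreeMonoid.toList_ofList, sqWord, Finset.smul_sum]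
      refine Finset.sum_congr rfl fun p _ => ?_
      rw [SqL_single]
      rw [smul_comm c, mul_smul_comm]

lemma SqL_zero (y : Gam) : SqL 0 y = y := by
  induction y using MonoidAlgebra.induction_linear with
  | zero => simp
  | add f g hf hg => rw [map_add, hf, hg]
  | single w c =>
      rw [SqL_single, sqWord_zero, MonoidAlgebra.smul_single, smul_eq_mul, mul_one]
      exact congrArg (fun u => MonoidAlgebra.single u c) (FreeMonoid.ofList_toList w)

/-- Extraction of the component with first letter `j`. -/
def popF (j : ℕ) : List ℕ → Gam
  | [] => 0
  | a :: t => if a = j then MonoidAlgebra.single (FreeMonoid.ofList t) 1 else 0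

def popL (j : ℕ) : Gam →ₗ[ZMod 2] Gam :=
  (Finsupp.lsum (ZMod 2) fun w =>
    LinearMap.toSpanSingleton (ZMod 2) Gam (popF j (FreeMonoid.toList w)))
  ∘ₗ (MonoidAlgebra.coeffLinearEquiv (ZMod 2)).toLinearMap

lemma popL_single (j : ℕ) (w : FreeMonoid ℕ) (c : ZMod 2) :
    popL j (MonoidAlgebra.single w c) = c • popF j (FreeMonoid.toList w) := by
  rw [popL, LinearMap.comp_apply, LinearEquiv.coe_coe, MonoidAlgebra.coeffLinearEquiv_apply,
    MonoidAlgebra.coeff_single]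
  erw [Finsupp.lsum_single]
  rw [LinearMap.toSpanSingleton_apply]

lemma popL_gen_mul (j a : ℕ) (y : Gam) :
    popL j (gen a * y) = if a = j then y else 0 := by
  induction y using MonoidAlgebra.induction_linear with
  | zero => simp
  | add f g hf hg => rw [mul_add, map_add, hf, hg]; split <;> simp
  | single w c =>
      rw [gen_mul_single, popL_single, FreeMonoid.toList_ofList, popF]
      split
      · rw [MonoidAlgebra.smul_single, smul_eq_mul, mul_one]
        exact congrArg (fun u => MonoidAlgebra.single u c) (FreeMonoid.ofList_toList w)
      · simp

lemma cast_eq_of_mod_eq {a b : ℕ} (h : a % 2 = b % 2) : ((a : ℕ) : ZMod 2) = ((b : ℕ) : ZMod 2) := by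
  rw [← ZMod.natCast_mod a 2, ← ZMod.natCast_mod b 2, h]

lemma chooseA (k : ℕ) : (4 * k + 1).choose 2 = (k * (4 * k + 1)) * 2 := by
  rw [Nat.choose_two_right, show 4 * k + 1 - 1 = 4 * k from by omega]
  exact Nat.div_eq_of_eq_mul_left (by norm_num) (by ring)

lemma chooseB (k : ℕ) : (4 * k + 2).choose 2 = (k * (4 * k + 1)) * 2 + (4 * k + 1) := by
  rw [Nat.choose_two_right, show 4 * k + 2 - 1 = 4 * k + 1 from by omega]
  exact Nat.div_eq_of_eq_mul_left (by norm_num) (by ring)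

lemma chooseC (k : ℕ) : (4 * k + 3).choose 2 = (k * (4 * k + 3)) * 2 + (4 * k + 3) := by
  rw [Nat.choose_two_right, show 4 * k + 3 - 1 = 4 * k + 2 from by omega]
  exact Nat.div_eq_of_eq_mul_left (by norm_num) (by ring)

lemma chooseD (k : ℕ) : (4 * k + 4).choose 2 = ((k + 1) * (4 * k + 3)) * 2 := by
  rw [Nat.choose_two_right, show 4 * k + 4 - 1 = 4 * k + 3 from by omega]
  exact Nat.div_eq_of_eq_mul_left (by norm_num) (by ring)

/-- If `x = Σ_{i≥1} [i]·x_i ∈ Γ_s` (`s ≥ 2`) satisfies `xSq² = 0`, then for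
each `m ≥ 1`: `x_{4m−2}Sq¹ = x_{4m−3}Sq²`, `x_{4m} = x_{4m−2}Sq²`,
`x_{4m+1} = x_{4m−1}Sq² + x_{4m}Sq¹`, and `x_{4m}Sq² = 0`. -/
theorem stmt_13 (s : ℕ) (hs : 2 ≤ s) (x : Gam) (x_ : ℕ → Gam)
    (hxlen : homLen s x) (hcomplen : ∀ i, homLen (s - 1) (x_ i))
    (hfin : (Function.support x_).Finite) (h0 : x_ 0 = 0)
    (hx : x = ∑ᶠ i : ℕ, gen i * x_ i)
    (hker : SqG 2 x = 0) :
    ∀ m : ℕ, 1 ≤ m →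
      SqG 1 (x_ (4 * m - 2)) = SqG 2 (x_ (4 * m - 3)) ∧
      x_ (4 * m) = SqG 2 (x_ (4 * m - 2)) ∧
      x_ (4 * m + 1) = SqG 2 (x_ (4 * m - 1)) + SqG 1 (x_ (4 * m)) ∧
      SqG 2 (x_ (4 * m)) = 0 := by
  classical
  -- rewrite the finsum as a finite sum
  have hsup : Function.support (fun i => gen i * x_ i) ⊆ (hfin.toFinset : Set ℕ) := by
    intro i hi
    simp only [Set.Finite.coe_toFinset, Function.mem_support]
    intro h
    apply hi
    simp [h]
  have hxs : x = ∑ i ∈ hfin.toFinset, gen i * x_ i := by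
    rw [hx]
    exact finsum_eq_finset_sum_of_support_subset _ hsup
  -- the basic equations
  have key : ∀ j : ℕ, 1 ≤ j →
      SqL 2 (x_ j) + ((j.choose 1 : ℕ) : ZMod 2) • SqL 1 (x_ (j + 1))
        + ((j.choose 2 : ℕ) : ZMod 2) • x_ (j + 2) = 0 := by
    intro j hj
    have h1 : popL j (SqL 2 x) = 0 := by
      rw [← SqG_eq_SqL, hker, map_zero]
    rw [hxs, map_sum, map_sum] at h1
    -- compute each term
    have hterm : ∀ i : ℕ, popL j (SqL 2 (gen i * x_ i)) =
        (if i = j then SqL 2 (x_ i) else 0)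
        + (if i = j + 1 then ((j.choose 1 : ℕ) : ZMod 2) • SqL 1 (x_ i) else 0)
        + (if i = j + 2 then ((j.choose 2 : ℕ) : ZMod 2) • x_ i else 0) := by
      intro i
      rw [SqL_gen_mul]
      rw [map_sum]
      rw [show Finset.range (2 + 1) = {0, 1, 2} from rfl]
      rw [Finset.sum_insert (by decide), Finset.sum_insert (by decide),
        Finset.sum_singleton]
      simp only [map_smul, popL_gen_mul]
      have e0 : (i - 0 = j) ↔ (i = j) := by omega
      have e1 : (i - 1 = j) ↔ (i = j + 1) := by omega
      have e2 : (i - 2 = j) ↔ (i = j + 2) := by omega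
      by_cases h : i = j
      · simp only [if_pos ((e0.mpr h)), if_neg (fun hh => by omega : ¬ i - 1 = j),
          if_neg (fun hh => by omega : ¬ i - 2 = j), if_pos h,
          if_neg (fun hh => by omega : ¬ i = j + 1),
          if_neg (fun hh => by omega : ¬ i = j + 2), smul_zero, add_zero]
        simp [h, Nat.sub_self]
      · by_cases h1 : i = j + 1
        · simp only [if_neg (fun hh => h (e0.mp hh)), if_pos (e1.mpr h1),
            if_neg (fun hh => by omega : ¬ i - 2 = j), if_neg h, if_pos h1,
            if_neg (fun hh => by omega : ¬ i = j + 2), smul_zero, zero_add, add_zero]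
          subst h1
          norm_num
        · by_cases h2 : i = j + 2
          · simp only [if_neg (fun hh => h (e0.mp hh)), if_neg (fun hh => h1 (e1.mp hh)),
              if_pos (e2.mpr h2), if_neg h, if_neg h1, if_pos h2, smul_zero, zero_add,
              add_zero]
            subst h2
            rw [show j + 2 - 2 = j from by omega, SqL_zero]
          · simp only [if_neg (fun hh => h (e0.mp hh)), if_neg (fun hh => h1 (e1.mp hh)),
              if_neg (fun hh => h2 (e2.mp hh)), if_neg h, if_neg h1, if_neg h2,
              smul_zero, add_zero]
    -- sum the terms
    simp only [hterm] at h1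
    rw [Finset.sum_add_distrib, Finset.sum_add_distrib] at h1
    have hv : ∀ (k : ℕ) (v : Gam), (v = 0 → x_ k = 0 → (0:Gam) = 0) → True := fun _ _ _ => trivial
    have sum_ite : ∀ (k : ℕ) (v : ℕ → Gam), (∀ i, x_ i = 0 → v i = 0) →
        (∑ i ∈ hfin.toFinset, if i = k then v i else 0) = v k := by
      intro k v hv0
      rw [Finset.sum_ite_eq' hfin.toFinset k v]
      split
      · rfl
      · rename_i hk
        rw [hv0]
        by_contra hne
        exact hk (hfin.mem_toFinset.mpr hne)
    rw [sum_ite j _ (fun i hi => by rw [hi, map_zero]),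
      sum_ite (j+1) _ (fun i hi => by rw [hi, map_zero, smul_zero]),
      sum_ite (j+2) _ (fun i hi => by rw [hi, smul_zero])] at h1
    exact h1
  -- conclude
  intro m hm
  obtain ⟨k, rfl⟩ : ∃ k, m = k + 1 := ⟨m - 1, by omega⟩
  have e2 : 4 * (k + 1) - 2 = 4 * k + 2 := by omega
  have e3 : 4 * (k + 1) - 3 = 4 * k + 1 := by omega
  have e1 : 4 * (k + 1) - 1 = 4 * k + 3 := by omega
  have e0 : 4 * (k + 1) = 4 * k + 4 := by omega
  rw [e2, e3, e1, e0]
  simp only [SqG_eq_SqL]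
  have K1 := key (4 * k + 1) (by omega)
  have K2 := key (4 * k + 2) (by omega)
  have K3 := key (4 * k + 3) (by omega)
  have K4 := key (4 * k + 4) (by omega)
  -- binomial coefficients mod 2
  have fA : (((4 * k + 1).choose 2 : ℕ) : ZMod 2) = 0 := by
    have h := chooseA k
    rw [cast_eq_of_mod_eq (b := 0) (by omega), Nat.cast_zero]
  have fB : (((4 * k + 2).choose 2 : ℕ) : ZMod 2) = 1 := by
    have h := chooseB k
    rw [cast_eq_of_mod_eq (b := 1) (by omega), Nat.cast_one]
  have fC : (((4 * k + 3).choose 2 : ℕ) : ZMod 2) = 1 := by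
    have h := chooseC k
    rw [cast_eq_of_mod_eq (b := 1) (by omega), Nat.cast_one]
  have fD : (((4 * k + 4).choose 2 : ℕ) : ZMod 2) = 0 := by
    have h := chooseD k
    rw [cast_eq_of_mod_eq (b := 0) (by omega), Nat.cast_zero]
  have g1 : ∀ n : ℕ, n % 2 = 1 → ((n.choose 1 : ℕ) : ZMod 2) = 1 := by
    intro n hn
    rw [Nat.choose_one_right, cast_eq_of_mod_eq (b := 1) (by omega), Nat.cast_one]
  have g0 : ∀ n : ℕ, n % 2 = 0 → ((n.choose 1 : ℕ) : ZMod 2) = 0 := by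
    intro n hn
    rw [Nat.choose_one_right, cast_eq_of_mod_eq (b := 0) (by omega), Nat.cast_zero]
  rw [g1 _ (by omega), fA, one_smul, zero_smul, add_zero] at K1
  rw [g0 _ (by omega), fB, one_smul, zero_smul, add_zero] at K2
  rw [g1 _ (by omega), fC, one_smul, one_smul] at K3
  rw [g0 _ (by omega), fD, zero_smul, zero_smul, add_zero, add_zero] at K4
  have neg_eq : ∀ y : Gam, -y = y := by
    intro y
    have h : (-1 : ZMod 2) = 1 := rfl
    rw [← one_smul (ZMod 2) y, ← neg_smul, h]
  refine ⟨?_, ?_, ?_, ?_⟩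
  · have h1 := add_eq_zero_iff_neg_eq.mp K1
    rw [neg_eq, show 4 * k + 1 + 1 = 4 * k + 2 from by omega] at h1
    exact h1.symm
  · have h2 := add_eq_zero_iff_neg_eq.mp K2
    rw [neg_eq, show 4 * k + 2 + 2 = 4 * k + 4 from by omega] at h2
    exact h2.symm
  · have h3 := add_eq_zero_iff_neg_eq.mp K3
    rw [neg_eq, show 4 * k + 3 + 1 = 4 * k + 4 from by omega,
      show 4 * k + 3 + 2 = 4 * k + 4 + 1 from by omega] at h3
    exact h3.symm
  · exact K4
end
end

section
/- In Γ₁ (the span of [a], a ≥ 1, with [a]Sq^i = C(a−i,i)[a−i] mod 2), for every degree d ≥ 2 one has ker Sq^2 ∩ Γ_{1,d} = im(Sq^2 : Γ_{1,d+2} → Γ_{1,d}). Moreover every element of Γ_{1,d+2} in the Sq^2-preimage is of the form [4j] or [4j+1] (j ≥ 1), and all such elements are annihilated by Sq^3. -/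
noncomputable section

/-- The degree-`d` component `Γ_{1,d}`: elements supported on the single index `d`. -/
def Gdeg (d : ℕ) : Set Gamma1 := {x | ∀ a ∈ x.support, a = d}

set_option linter.unreachableTactic false
set_option linter.unusedTactic false

lemma sq1_zero (i : ℕ) : sq1 i 0 = 0 := by simp [sq1]

lemma sq1_e (i a : ℕ) : sq1 i (e a) = (Nat.choose (a - i) i : ZMod 2) • e (a - i) := by
  unfold sq1 e
  rw [Finsupp.sum_single_index] <;> simp

lemma e_ne_zero (a : ℕ) : e a ≠ 0 := by
  simp [e, Finsupp.single_eq_zero]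

lemma zmod2_cases (c : ZMod 2) : c = 0 ∨ c = 1 := by revert c; decide

lemma mem_Gdeg_cases {d : ℕ} {x : Gamma1} (h : x ∈ Gdeg d) : x = 0 ∨ x = e d := by
  by_cases hx : x = 0
  · left; exact hx
  · right
    obtain ⟨a, ha⟩ := Finsupp.support_nonempty_iff.mpr hx
    have had : a = d := h a ha
    ext b
    by_cases hb : b = d
    · subst hb
      have hbd : x b ≠ 0 := by
        rw [← had]; exact Finsupp.mem_support_iff.mp ha
      have : x b = 1 := (zmod2_cases (x b)).resolve_left hbd
      simp [this, e, Finsupp.single_apply]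
    · have : b ∉ x.support := fun hmem => hb (h b hmem)
      have hxb : x b = 0 := Finsupp.notMem_support_iff.mp this
      simp [hxb, e, Finsupp.single_apply, Ne.symm hb, hb]

lemma zero_mem_Gdeg (d : ℕ) : (0 : Gamma1) ∈ Gdeg d := by
  intro a ha; simp at ha

lemma e_mem_Gdeg (d : ℕ) : e d ∈ Gdeg d := by
  intro a ha
  simpa [e] using Finsupp.support_single_subset ha

instance : Fact (Nat.Prime 2) := ⟨Nat.prime_two⟩

lemma choose2_zmod (n : ℕ) : (Nat.choose n 2 : ZMod 2) = ((n / 2 : ℕ) : ZMod 2) := by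
  have h := Choose.choose_modEq_choose_mod_mul_choose_div_nat (n := n) (k := 2) (p := 2)
  have h2 := (ZMod.natCast_eq_natCast_iff _ _ _).mpr h
  simpa using h2

lemma choose3_zmod (n : ℕ) :
    (Nat.choose n 3 : ZMod 2) = ((n % 2 : ℕ) : ZMod 2) * ((n / 2 : ℕ) : ZMod 2) := by
  have h := Choose.choose_modEq_choose_mod_mul_choose_div_nat (n := n) (k := 3) (p := 2)
  have h2 := (ZMod.natCast_eq_natCast_iff _ _ _).mpr h
  simpa using h2

lemma c2 (n : ℕ) : (Nat.choose n 2 : ZMod 2) = if n % 4 = 2 ∨ n % 4 = 3 then 1 else 0 := by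
  rw [choose2_zmod, ← ZMod.natCast_mod (n / 2) 2]
  have : (n / 2) % 2 = if n % 4 = 2 ∨ n % 4 = 3 then 1 else 0 := by
    split <;> omega
  rw [this]
  split <;> simp

lemma c3 (n : ℕ) : (Nat.choose n 3 : ZMod 2) = if n % 4 = 3 then 1 else 0 := by
  rw [choose3_zmod, ← ZMod.natCast_mod (n / 2) 2]
  have h1 : n % 2 = if n % 4 = 3 then 1 else (if n % 4 = 1 then 1 else 0) := by
    split <;> [omega; split <;> omega]
  have h2 : (n / 2) % 2 = if n % 4 = 2 ∨ n % 4 = 3 then 1 else 0 := by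
    split <;> omega
  rw [h1, h2]
  split
  · rename_i h; simp [h]
  · rename_i h; split <;> split <;> simp_all <;> omega

/-- For every `d ≥ 2`, `ker Sq² ∩ Γ_{1,d} = im (Sq² : Γ_{1,d+2} → Γ_{1,d})`;
moreover every element of `Γ_{1,d+2}` mapping onto the generator `[d]` under `Sq²`
is of the form `[4j]` or `[4j+1]` with `j ≥ 1`, and is annihilated by `Sq³`. -/
theorem stmt_18 (d : ℕ) (hd : 2 ≤ d) :
    ({x | x ∈ Gdeg d ∧ sq1 2 x = 0} = sq1 2 '' Gdeg (d + 2)) ∧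
    (∀ y ∈ Gdeg (d + 2), sq1 2 y = e d →
      (∃ j : ℕ, 1 ≤ j ∧ (d + 2 = 4 * j ∨ d + 2 = 4 * j + 1)) ∧ sq1 3 y = 0) := by
  have hkey : sq1 2 (e (d + 2)) = (Nat.choose d 2 : ZMod 2) • e d := by
    rw [sq1_e]; norm_num
  constructor
  · ext x
    simp only [Set.mem_setOf_eq, Set.mem_image]
    constructor
    · rintro ⟨hx, hk⟩
      rcases mem_Gdeg_cases hx with rfl | rfl
      · exact ⟨0, zero_mem_Gdeg _, sq1_zero 2⟩
      · -- sq1 2 (e d) = 0 so C(d-2,2) = 0, hence d % 4 ∈ {2,3}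
        rw [sq1_e] at hk
        have hc : (Nat.choose (d - 2) 2 : ZMod 2) = 0 := by
          by_contra hne
          have : (Nat.choose (d - 2) 2 : ZMod 2) = 1 := (zmod2_cases _).resolve_left hne
          rw [this, one_smul] at hk
          exact e_ne_zero _ hk
        rw [c2] at hc
        have hmod : ¬((d - 2) % 4 = 2 ∨ (d - 2) % 4 = 3) := by
          intro h; rw [if_pos h] at hc; exact one_ne_zero hc
        have hd4 : d % 4 = 2 ∨ d % 4 = 3 := by omega
        refine ⟨e (d + 2), e_mem_Gdeg _, ?_⟩
        rw [hkey, c2, if_pos (by omega : d % 4 = 2 ∨ d % 4 = 3), one_smul]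
    · rintro ⟨y, hy, rfl⟩
      rcases mem_Gdeg_cases hy with rfl | rfl
      · rw [sq1_zero]
        exact ⟨zero_mem_Gdeg _, sq1_zero 2⟩
      · rw [hkey]
        by_cases h4 : d % 4 = 2 ∨ d % 4 = 3
        · rw [c2, if_pos h4, one_smul]
          refine ⟨e_mem_Gdeg _, ?_⟩
          rw [sq1_e, c2, if_neg (by omega), zero_smul]
        · rw [c2, if_neg h4, zero_smul]
          exact ⟨zero_mem_Gdeg _, sq1_zero 2⟩
  · intro y hy hsq
    rcases mem_Gdeg_cases hy with rfl | rfl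
    · rw [sq1_zero] at hsq
      exact absurd hsq.symm (e_ne_zero d)
    · rw [hkey] at hsq
      have h4 : d % 4 = 2 ∨ d % 4 = 3 := by
        by_contra h
        rw [c2, if_neg h, zero_smul] at hsq
        exact e_ne_zero d hsq.symm
      constructor
      · refine ⟨(d + 2) / 4, by omega, by omega⟩
      · rw [sq1_e, c3, if_neg (by omega), zero_smul]
end
end
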